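/- Let Q be a matrix with rows indexed by tuples (i₁,…,i_d), i_k ∈ {1,…,I_k}, and columns indexed by κ ∈ {1,…,K}, given in MPO form by tensors 𝒬^(1) ∈ ℝ^{1×I₁×K×R₂} and 𝒬^(k) ∈ ℝ^{R_k×I_k×1×R_{k+1}} for k = 2,…,d with R_{d+1} = 1, i.e. Q((i₁,…,i_d),κ) = Σ_{r₂,…,r_d} 𝒬^(1)(1,i₁,κ,r₂)·𝒬^(2)(r₂,i₂,1,r₃)⋯𝒬^(d)(r_d,i_d,1,1). Suppose that for every k = 2,…,d the R_k × (I_k·R_{k+1}) matrix G_k obtained by reshaping 𝒬^(k) (with rows indexed by r_k and columns by pairs (i_k,r_{k+1})) satisfies G_k·G_kᵀ = I_{R_k}. Then QᵀQ = Q₁ᵀQ₁, where Q₁ is the (I₁·R₂) × K matrix obtained by reshaping 𝒬^(1) (rows indexed by pairs (i₁,r₂), columns by κ). In particular, if Q₁ has orthonormal columns, i.e. Q₁ᵀQ₁ = I_K, then QᵀQ = I_K, so Q has orthonormal columns. -/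

import Mathlib

open Matrix BigOperators

lemma mpo_gen : ∀ (d : ℕ) (Idim : Fin d → ℕ) (R : Fin (d + 1) → ℕ)
    (T : (k : Fin d) → Fin (R k.castSucc) → Fin (Idim k) → Fin (R k.succ) → ℝ)
    (_ : ∀ (k : Fin d) (r s : Fin (R k.castSucc)),
        (∑ p : Fin (Idim k) × Fin (R k.succ), T k r p.1 p.2 * T k s p.1 p.2)
        = if r = s then 1 else 0)
    (M : Fin (R 0) → Fin (R 0) → ℝ),
    ∑ i : (k : Fin d) → Fin (Idim k), ∑ r : (k : Fin (d + 1)) → Fin (R k),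
      ∑ s : (k : Fin (d + 1)) → Fin (R k),
        (if r (Fin.last d) = s (Fin.last d) then (1 : ℝ) else 0) * M (r 0) (s 0) *
        ((∏ k : Fin d, T k (r k.castSucc) (i k) (r k.succ)) *
         (∏ k : Fin d, T k (s k.castSucc) (i k) (s k.succ)))
    = ∑ a, M a a := by
  intro d
  induction d with
  | zero =>
    intro Idim R T hG M
    rw [Fintype.sum_unique]
    simp only [Fin.prod_univ_zero, mul_one]
    refine Eq.trans (Eq.symm (Fintype.sum_equiv
      (Equiv.piUnique fun k : Fin 1 => Fin (R k)).symm _ _ fun a => Fintype.sum_equiv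
      (Equiv.piUnique fun k : Fin 1 => Fin (R k)).symm _ _ fun b => rfl)) ?_
    show ∑ a : Fin (R 0), ∑ b : Fin (R 0), (if a = b then (1:ℝ) else 0) * M a b = ∑ a, M a a
    simp [ite_mul, Finset.sum_ite_eq]
  | succ d ih =>
    intro Idim R T hG M
    -- reindex the three pi-type sums by `Fin.consEquiv`
    refine Eq.trans (Eq.symm (Fintype.sum_equiv
        (Fin.consEquiv fun k : Fin (d + 1) => Fin (Idim k)) _ _ fun p =>
        Fintype.sum_equiv (Fin.consEquiv fun k : Fin (d + 2) => Fin (R k)) _ _ fun q =>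
        Fintype.sum_equiv (Fin.consEquiv fun k : Fin (d + 2) => Fin (R k)) _ _ fun w =>
          rfl)) ?_
    simp only [Fin.consEquiv_apply, Fin.prod_univ_succ, Fin.castSucc_zero, Fin.cons_zero,
      ← Fin.succ_last, ← Fin.succ_castSucc, Fin.cons_succ, Fintype.sum_prod_type]
    -- reorder the sums: [i0, i', a, r', b, s'] → [i', r', s', i0, a, b]
    rw [Finset.sum_comm]
    conv_lhs => enter [2, ip, 2, i0]; rw [Finset.sum_comm]
    conv_lhs => enter [2, ip]; rw [Finset.sum_comm]
    conv_lhs => enter [2, ip, 2, rp, 2, i0, 2, a]; rw [Finset.sum_comm]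
    conv_lhs => enter [2, ip, 2, rp, 2, i0]; rw [Finset.sum_comm]
    conv_lhs => enter [2, ip, 2, rp]; rw [Finset.sum_comm]
    -- the new transfer matrix
    set M' : Fin (R (Fin.succ 0)) → Fin (R (Fin.succ 0)) → ℝ := fun a' b' =>
      ∑ i0 : Fin (Idim 0), ∑ a : Fin (R 0), ∑ b : Fin (R 0),
        M a b * (T 0 a i0 a' * T 0 b i0 b') with hM'
    have hstep : ∀ (ip : (k : Fin d) → Fin (Idim k.succ))
        (rp sp : (k : Fin (d + 1)) → Fin (R k.succ)),
        (∑ i0 : Fin (Idim 0), ∑ a : Fin (R 0), ∑ b : Fin (R 0),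
          (if rp (Fin.last d) = sp (Fin.last d) then (1:ℝ) else 0) * M a b *
          ((T 0 a i0 (rp 0) * ∏ k : Fin d, T k.succ (rp k.castSucc) (ip k) (rp k.succ)) *
           (T 0 b i0 (sp 0) * ∏ k : Fin d, T k.succ (sp k.castSucc) (ip k) (sp k.succ))))
        = (if rp (Fin.last d) = sp (Fin.last d) then (1:ℝ) else 0) * M' (rp 0) (sp 0) *
          ((∏ k : Fin d, T k.succ (rp k.castSucc) (ip k) (rp k.succ)) *
           (∏ k : Fin d, T k.succ (sp k.castSucc) (ip k) (sp k.succ))) := by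
      intro ip rp sp
      rw [hM']
      simp only [Finset.mul_sum, Finset.sum_mul]
      exact Finset.sum_congr rfl fun i0 _ => Finset.sum_congr rfl fun a _ =>
        Finset.sum_congr rfl fun b _ => by ring
    refine Eq.trans (Finset.sum_congr rfl fun ip _ => Finset.sum_congr rfl fun rp _ =>
      Finset.sum_congr rfl fun sp _ => hstep ip rp sp) ?_
    refine Eq.trans (ih (fun k => Idim k.succ) (fun k => R k.succ) (fun k => T k.succ)
      (fun k r s => hG k.succ r s) M') ?_
    -- finally, contract `M'` back to `M` using `hG 0`
    have h0 : ∀ a b : Fin (R 0), (∑ i0 : Fin (Idim 0), ∑ a' : Fin (R (Fin.succ 0)),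
        T 0 a i0 a' * T 0 b i0 a') = if a = b then (1:ℝ) else 0 := by
      intro a b
      have := hG 0 a b
      rw [Fintype.sum_prod_type] at this
      exact this
    rw [hM']
    -- reorder [a', i0, a, b] → [a, b, i0, a']
    rw [Finset.sum_comm]
    conv_lhs => enter [2, i0]; rw [Finset.sum_comm]
    rw [Finset.sum_comm]
    conv_lhs => enter [2, a, 2, i0]; rw [Finset.sum_comm]
    conv_lhs => enter [2, a]; rw [Finset.sum_comm]
    simp only [← Finset.mul_sum]
    refine Eq.trans (Finset.sum_congr rfl fun x _ => Finset.sum_congr rfl fun y _ =>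
      congrArg (M x y * ·) (h0 x y)) ?_
    simp [h0, mul_ite, Finset.sum_ite_eq]

/-- Orthogonality of a right-orthogonalized MPO: let `Q ∈ ℝ^{(I₁⋯I_d)×K}` be given in
MPO form with first tensor `Q1t` (of size `1×I₁×K×R₂`, here `R 0 = R₂`) and remaining
tensors `T k` (of size `R_k×I_k×1×R_{k+1}`, with `R_{d+1}=1`).  If each reshaped tensor
`G_k ∈ ℝ^{R_k×(I_k·R_{k+1})}` satisfies `G_k·G_kᵀ = I`, then `QᵀQ = Q₁ᵀQ₁` where `Q₁` is
the `(I₁·R₂)×K` reshaping of the first tensor; in particular, if `Q₁` has orthonormal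
columns then so does `Q`. -/
theorem mpo_qr_orthogonality {d I₁ K : ℕ} (Idim : Fin d → ℕ)
    (R : Fin (d + 1) → ℕ) (hRlast : R (Fin.last d) = 1)
    (Q1t : Fin I₁ → Fin K → Fin (R 0) → ℝ)
    (T : (k : Fin d) → Fin (R k.castSucc) → Fin (Idim k) → Fin (R k.succ) → ℝ)
    (Q : Matrix (Fin I₁ × ((k : Fin d) → Fin (Idim k))) (Fin K) ℝ)
    (hQ : ∀ i κ, Q i κ = ∑ r : (k : Fin (d + 1)) → Fin (R k),
        Q1t i.1 κ (r 0) * ∏ k : Fin d, T k (r k.castSucc) (i.2 k) (r k.succ))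
    (hG : ∀ k : Fin d,
      (Matrix.of fun (r : Fin (R k.castSucc)) (p : Fin (Idim k) × Fin (R k.succ)) =>
          T k r p.1 p.2) *
      (Matrix.of fun (r : Fin (R k.castSucc)) (p : Fin (Idim k) × Fin (R k.succ)) =>
          T k r p.1 p.2)ᵀ = 1) :
    Qᵀ * Q =
      (Matrix.of fun (p : Fin I₁ × Fin (R 0)) (κ : Fin K) => Q1t p.1 κ p.2)ᵀ *
      (Matrix.of fun (p : Fin I₁ × Fin (R 0)) (κ : Fin K) => Q1t p.1 κ p.2) ∧
    ((Matrix.of fun (p : Fin I₁ × Fin (R 0)) (κ : Fin K) => Q1t p.1 κ p.2)ᵀ *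
      (Matrix.of fun (p : Fin I₁ × Fin (R 0)) (κ : Fin K) => Q1t p.1 κ p.2) = 1 →
      Qᵀ * Q = 1) := by
  have hG' : ∀ (k : Fin d) (r s : Fin (R k.castSucc)),
      (∑ p : Fin (Idim k) × Fin (R k.succ), T k r p.1 p.2 * T k s p.1 p.2)
      = if r = s then 1 else 0 := by
    intro k r s
    have := congrFun (congrFun (hG k) r) s
    simpa [Matrix.mul_apply, Matrix.one_apply] using this
  have hind : ∀ x y : Fin (R (Fin.last d)), x = y := by
    rw [hRlast]; exact fun x y => Subsingleton.elim x y
  have main : Qᵀ * Q =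
      (Matrix.of fun (p : Fin I₁ × Fin (R 0)) (κ : Fin K) => Q1t p.1 κ p.2)ᵀ *
      (Matrix.of fun (p : Fin I₁ × Fin (R 0)) (κ : Fin K) => Q1t p.1 κ p.2) := by
    ext κ μ
    rw [Matrix.mul_apply, Matrix.mul_apply]
    simp only [Matrix.transpose_apply, Matrix.of_apply]
    rw [Fintype.sum_prod_type, Fintype.sum_prod_type]
    refine Finset.sum_congr rfl fun i₁ _ => ?_
    calc ∑ i : (k : Fin d) → Fin (Idim k), Q (i₁, i) κ * Q (i₁, i) μ
        = ∑ i : (k : Fin d) → Fin (Idim k), ∑ r : (k : Fin (d + 1)) → Fin (R k),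
            ∑ s : (k : Fin (d + 1)) → Fin (R k),
            (Q1t i₁ κ (r 0) * ∏ k : Fin d, T k (r k.castSucc) (i k) (r k.succ)) *
            (Q1t i₁ μ (s 0) * ∏ k : Fin d, T k (s k.castSucc) (i k) (s k.succ)) := by
          refine Finset.sum_congr rfl fun i _ => ?_
          rw [hQ (i₁, i) κ, hQ (i₁, i) μ, Finset.sum_mul_sum]
      _ = ∑ i : (k : Fin d) → Fin (Idim k), ∑ r : (k : Fin (d + 1)) → Fin (R k),
            ∑ s : (k : Fin (d + 1)) → Fin (R k),
            (if r (Fin.last d) = s (Fin.last d) then (1:ℝ) else 0) *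
            (Q1t i₁ κ (r 0) * Q1t i₁ μ (s 0)) *
            ((∏ k : Fin d, T k (r k.castSucc) (i k) (r k.succ)) *
             (∏ k : Fin d, T k (s k.castSucc) (i k) (s k.succ))) := by
          refine Finset.sum_congr rfl fun i _ => Finset.sum_congr rfl fun r _ =>
            Finset.sum_congr rfl fun s _ => ?_
          rw [if_pos (hind _ _)]
          ring
      _ = ∑ a : Fin (R 0), Q1t i₁ κ a * Q1t i₁ μ a :=
          mpo_gen d Idim R T hG' fun a b => Q1t i₁ κ a * Q1t i₁ μ b
  exact ⟨main, fun h => by rw [main, h]⟩
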